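/- Let d ∈ ℝ² and let x_0, x_1, …, x_{k+1} be distinct points of ℝ², all distinct from d, such that: (i) there is a vector u with ⟪x_j − d, u⟫ > 0 for every j (all points lie in an open half-plane whose boundary line passes through d); (ii) no two of the points x_i, x_j (i ≠ j) are collinear with d; and (iii) the points are angularly sorted around d, i.e., the oriented angles from u to x_j − d (which lie in (−π/2, π/2)) are strictly increasing in j. Then the polygonal path with edges [x_j, x_{j+1}] for j = 0, …, k is simple: any two consecutive segments [x_{j}, x_{j+1}] and [x_{j+1}, x_{j+2}] intersect exactly in the point x_{j+1}, and any two non-consecutive segments are disjoint. -/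

import Mathlib

open Real EuclideanGeometry
open scoped RealInnerProductSpace

noncomputable section

/-- The Euclidean plane ℝ². -/
abbrev Plane : Type := EuclideanSpace ℝ (Fin 2)

instance : Fact (Module.finrank ℝ Plane = 2) := ⟨finrank_euclideanSpace_fin⟩

/-- The standard orientation of the plane. -/
def planeOrientation : Orientation ℝ Plane (Fin 2) :=
  (EuclideanSpace.basisFun (Fin 2) ℝ).toBasis.orientation

/-- The determinant `det(p, q)` of the 2×2 matrix with columns `p`, `q`. -/
def det2 (p q : Plane) : ℝ := p 0 * q 1 - p 1 * q 0

/-- A set of points is in general position if no three of its points are collinear. -/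
def GeneralPosition (S : Set Plane) : Prop :=
  ∀ p ∈ S, ∀ q ∈ S, ∀ r ∈ S, p ≠ q → p ≠ r → q ≠ r →
    ¬ Collinear ℝ ({p, q, r} : Set Plane)

/-- `v : ZMod n → Plane` is a polygonization of `S`: a bijection from `ℤ/nℤ` onto `S`
such that the closed segments `[v i, v (i+1)]` form a simple closed polygon:
consecutive segments meet exactly in their common endpoint, and non-consecutive
segments are disjoint. -/
def IsPolygonization (n : ℕ) (S : Set Plane) (v : ZMod n → Plane) : Prop :=
  Function.Injective v ∧ Set.range v = S ∧
  (∀ i : ZMod n,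
    segment ℝ (v i) (v (i + 1)) ∩ segment ℝ (v (i + 1)) (v (i + 2)) = {v (i + 1)}) ∧
  (∀ i j : ZMod n, i ≠ j → i + 1 ≠ j → j + 1 ≠ i →
    Disjoint (segment ℝ (v i) (v (i + 1))) (segment ℝ (v j) (v (j + 1))))

/-- A polygonization is counterclockwise if its signed area
`(1/2)·Σ_i det(v i, v (i+1))` is positive. -/
def Counterclockwise (n : ℕ) (v : ZMod n → Plane) : Prop :=
  0 < (1 / 2 : ℝ) * ∑ i ∈ Finset.range n, det2 (v (i : ZMod n)) (v ((i : ZMod n) + 1))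

/-- The interior angle at vertex `v i` of a counterclockwise polygonization: the unique
real number in `(0, 2π)` congruent modulo `2π` to the oriented angle from
`v (i+1) - v i` to `v (i-1) - v i`. -/
def interiorAngle (n : ℕ) (v : ZMod n → Plane) (i : ZMod n) : ℝ :=
  let a := (planeOrientation.oangle (v (i + 1) - v i) (v (i - 1) - v i)).toReal
  if 0 < a then a else a + 2 * π

/-- A point `p` of `S` is an extreme point of the convex hull of `S` if it does not lie
in the convex hull of the other points of `S`. -/
def IsExtremePt (S : Set Plane) (p : Plane) : Prop :=
  p ∈ S ∧ p ∉ convexHull ℝ (S \ {p})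

lemma my_areaForm_coords (a b : Plane) :
    planeOrientation.areaForm a b = a 0 * b 1 - a 1 * b 0 := by
  have hv : planeOrientation.volumeForm = (EuclideanSpace.basisFun (Fin 2) ℝ).toBasis.det :=
    planeOrientation.volumeForm_robust (EuclideanSpace.basisFun (Fin 2) ℝ) rfl
  rw [Orientation.areaForm_to_volumeForm, hv]
  simp [Module.Basis.det_apply, Matrix.det_fin_two, Module.Basis.toMatrix_apply,
    OrthonormalBasis.coe_toBasis_repr_apply, EuclideanSpace.basisFun_repr]
  ring

lemma my_areaForm_sin (x y : Plane) (hx : x ≠ 0) (hy : y ≠ 0) :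
    planeOrientation.areaForm x y
      = ‖x‖ * ‖y‖ * Real.Angle.sin (planeOrientation.oangle x y) := by
  set o := planeOrientation
  have hnx : ‖x‖ ≠ 0 := by simpa using hx
  have hny : ‖y‖ ≠ 0 := by simpa using hy
  rw [Orientation.oangle, Real.Angle.sin_coe, Complex.sin_arg, o.norm_kahler]
  simp only [Orientation.kahler_apply_apply, Complex.real_smul, Complex.add_im, Complex.ofReal_im,
    Complex.mul_im, Complex.I_im, Complex.I_re, Complex.ofReal_re, mul_one, mul_zero, zero_add,
    add_zero]
  field_simp

lemma my_inner_coords (v w : Plane) : ⟪v, w⟫ = v 0 * w 0 + v 1 * w 1 := by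
  simp [PiLp.inner_apply, RCLike.inner_apply, Fin.sum_univ_two]
  ring

lemma my_abs_oangle_lt (u v : Plane) (h : 0 < ⟪v, u⟫) :
    |(planeOrientation.oangle u v).toReal| < π / 2 := by
  set o := planeOrientation
  set t := (o.oangle u v).toReal with ht
  have h' : 0 < ⟪u, v⟫ := by rwa [real_inner_comm]
  have hnu : (0:ℝ) < ‖u‖ := by
    rcases eq_or_ne u 0 with rfl | hu
    · rw [inner_zero_left] at h'; exact absurd h' (lt_irrefl _)
    · exact norm_pos_iff.2 hu
  have hnv : (0:ℝ) < ‖v‖ := by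
    rcases eq_or_ne v 0 with rfl | hv
    · rw [inner_zero_right] at h'; exact absurd h' (lt_irrefl _)
    · exact norm_pos_iff.2 hv
  have hcos : 0 < Real.cos t := by
    have h2 := o.inner_eq_norm_mul_norm_mul_cos_oangle u v
    rw [← Real.Angle.coe_toReal (o.oangle u v), Real.Angle.cos_coe] at h2
    nlinarith [mul_pos hnu hnv]
  have h3 : t ≤ π := Real.Angle.toReal_le_pi _
  have h4 : -π < t := Real.Angle.neg_pi_lt_toReal _
  by_contra hc
  push_neg at hc
  have : Real.cos |t| ≤ 0 :=
    Real.cos_nonpos_of_pi_div_two_le_of_le hc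
      (le_trans (abs_le.2 ⟨by linarith, h3⟩) (by nlinarith [pi_pos]))
  rw [Real.cos_abs] at this
  linarith

lemma my_det_pos (u a b : Plane) (ha : 0 < ⟪a, u⟫) (hb : 0 < ⟪b, u⟫)
    (hlt : (planeOrientation.oangle u a).toReal < (planeOrientation.oangle u b).toReal) :
    0 < a 0 * b 1 - a 1 * b 0 := by
  set o := planeOrientation with ho
  have ha0 : a ≠ 0 := by rintro rfl; rw [inner_zero_left] at ha; exact lt_irrefl _ ha
  have hb0 : b ≠ 0 := by rintro rfl; rw [inner_zero_left] at hb; exact lt_irrefl _ hb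
  have hu0 : u ≠ 0 := by rintro rfl; rw [inner_zero_right] at ha; exact lt_irrefl _ ha
  have h1 := abs_lt.1 (my_abs_oangle_lt u a ha)
  have h2 := abs_lt.1 (my_abs_oangle_lt u b hb)
  set θa := (o.oangle u a).toReal with hθa
  set θb := (o.oangle u b).toReal with hθb
  have hoab : o.oangle a b = ((θb - θa : ℝ) : Real.Angle) := by
    calc o.oangle a b = o.oangle a u + o.oangle u b := (o.oangle_add ha0 hu0 hb0).symm
      _ = -(o.oangle u a) + o.oangle u b := by rw [o.oangle_rev u a]
      _ = -((θa : ℝ) : Real.Angle) + ((θb : ℝ) : Real.Angle) := by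
          rw [hθa, hθb, Real.Angle.coe_toReal, Real.Angle.coe_toReal]
      _ = ((θb - θa : ℝ) : Real.Angle) := by
          rw [sub_eq_add_neg, Real.Angle.coe_add, Real.Angle.coe_neg, add_comm]
  have hsin : 0 < Real.sin (θb - θa) :=
    Real.sin_pos_of_pos_of_lt_pi (by linarith) (by linarith)
  have hA := my_areaForm_sin a b ha0 hb0
  rw [← ho, hoab, Real.Angle.sin_coe] at hA
  rw [← my_areaForm_coords, ← ho, hA]
  have hna : (0:ℝ) < ‖a‖ := norm_pos_iff.2 ha0
  have hnb : (0:ℝ) < ‖b‖ := norm_pos_iff.2 hb0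
  positivity

lemma my_seg_mem (d : Plane) {a b p : Plane} (hp : p ∈ segment ℝ a b) :
    ∃ s t : ℝ, 0 ≤ s ∧ 0 ≤ t ∧ s + t = 1 ∧
      (∀ m : Fin 2, p m - d m = s * (a m - d m) + t * (b m - d m)) := by
  obtain ⟨s, t, hs, ht, hst, rfl⟩ := hp
  refine ⟨s, t, hs, ht, hst, fun m => ?_⟩
  simp only [PiLp.add_apply, PiLp.smul_apply, smul_eq_mul]
  linear_combination (d m) * hst

/-- Let `x 0, x 1, …, x (k+1)` be distinct points, all distinct from `d`, lying in an open
half-plane bounded by a line through `d` (witnessed by the vector `u`), no two collinear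
with `d`, and angularly sorted around `d` (the oriented angles from `u` to `x j − d`, which
lie in `(−π/2, π/2)`, are strictly increasing). Then the polygonal path with edges
`[x j, x (j+1)]` for `j = 0, …, k` is simple: consecutive segments intersect exactly in
their common endpoint and non-consecutive segments are disjoint. -/
theorem angularly_sorted_path_is_simple (k : ℕ) (d : Plane) (x : ℕ → Plane) (u : Plane)
    (hinj : ∀ i ≤ k + 1, ∀ j ≤ k + 1, x i = x j → i = j)
    (hd : ∀ j ≤ k + 1, x j ≠ d)
    (hu : ∀ j ≤ k + 1, 0 < ⟪x j - d, u⟫)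
    (hcol : ∀ i ≤ k + 1, ∀ j ≤ k + 1, i ≠ j → ¬ Collinear ℝ ({d, x i, x j} : Set Plane))
    (hsorted : ∀ i ≤ k + 1, ∀ j ≤ k + 1, i < j →
      (planeOrientation.oangle u (x i - d)).toReal <
        (planeOrientation.oangle u (x j - d)).toReal) :
    (∀ j, j + 1 ≤ k →
      segment ℝ (x j) (x (j + 1)) ∩ segment ℝ (x (j + 1)) (x (j + 2)) = {x (j + 1)}) ∧
    (∀ i j, j ≤ k → i + 1 < j →
      Disjoint (segment ℝ (x i) (x (i + 1))) (segment ℝ (x j) (x (j + 1)))) := by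
  have hdet' : ∀ i j : ℕ, i ≤ k + 1 → j ≤ k + 1 → i < j →
      0 < (x i 0 - d 0) * (x j 1 - d 1) - (x i 1 - d 1) * (x j 0 - d 0) := by
    intro i j hi hj hij
    have := my_det_pos u (x i - d) (x j - d) (hu i hi) (hu j hj) (hsorted i hi j hj hij)
    simpa [PiLp.sub_apply] using this
  have hinner : ∀ j, j ≤ k + 1 → 0 < (x j 0 - d 0) * u 0 + (x j 1 - d 1) * u 1 := by
    intro j hj
    have := hu j hj
    rw [my_inner_coords] at this
    simpa [PiLp.sub_apply] using this
  constructor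
  · intro j hj
    apply Set.eq_singleton_iff_unique_mem.mpr
    refine ⟨⟨right_mem_segment ℝ _ _, left_mem_segment ℝ _ _⟩, ?_⟩
    rintro p ⟨hp1, hp2⟩
    obtain ⟨s, t, hs, ht, hst, hq⟩ := my_seg_mem d hp1
    obtain ⟨s', t', hs', ht', hst', hq'⟩ := my_seg_mem d hp2
    have D1 := hdet' j (j + 1) (by omega) (by omega) (by omega)
    have D2 := hdet' (j + 1) (j + 2) (by omega) (by omega) (by omega)
    have e0 : s * (x j 0 - d 0) + t * (x (j+1) 0 - d 0)
        = s' * (x (j+1) 0 - d 0) + t' * (x (j+2) 0 - d 0) := by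
      rw [← hq 0, ← hq' 0]
    have e1 : s * (x j 1 - d 1) + t * (x (j+1) 1 - d 1)
        = s' * (x (j+1) 1 - d 1) + t' * (x (j+2) 1 - d 1) := by
      rw [← hq 1, ← hq' 1]
    have hkey : s * ((x j 0 - d 0) * (x (j+1) 1 - d 1) - (x j 1 - d 1) * (x (j+1) 0 - d 0))
        = -(t' * ((x (j+1) 0 - d 0) * (x (j+2) 1 - d 1)
            - (x (j+1) 1 - d 1) * (x (j+2) 0 - d 0))) := by
      linear_combination (x (j+1) 1 - d 1) * e0 - (x (j+1) 0 - d 0) * e1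
    have hs0 : s = 0 := by nlinarith [mul_nonneg ht' D2.le, mul_nonneg hs D1.le]
    have ht1 : t = 1 := by linarith
    ext m
    have hm := hq m
    rw [hs0, ht1] at hm
    linarith
  · intro i j hjk hij
    rw [Set.disjoint_left]
    intro p hp1 hp2
    obtain ⟨s, t, hs, ht, hst, hq⟩ := my_seg_mem d hp1
    obtain ⟨s', t', hs', ht', hst', hq'⟩ := my_seg_mem d hp2
    have D3 := hdet' i (i + 1) (by omega) (by omega) (by omega)
    have Dab := hdet' (i + 1) j (by omega) (by omega) (by omega)
    have Dbc := hdet' j (j + 1) (by omega) (by omega) (by omega)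
    have Ia := hinner (i + 1) (by omega)
    have Ib := hinner j (by omega)
    have Ic := hinner (j + 1) (by omega)
    have hPeq : (p 0 - d 0) * u 0 + (p 1 - d 1) * u 1
        = s' * ((x j 0 - d 0) * u 0 + (x j 1 - d 1) * u 1)
          + t' * ((x (j+1) 0 - d 0) * u 0 + (x (j+1) 1 - d 1) * u 1) := by
      linear_combination u 0 * hq' 0 + u 1 * hq' 1
    have hP : 0 < (p 0 - d 0) * u 0 + (p 1 - d 1) * u 1 := by
      rcases eq_or_lt_of_le hs' with h | h
      · have ht'1 : t' = 1 := by linarith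
        rw [hPeq, ← h, ht'1]
        linarith
      · rw [hPeq]
        nlinarith [mul_pos h Ib, mul_nonneg ht' Ic.le]
    have hR : (x (i+1) 0 - d 0) * (p 1 - d 1) - (x (i+1) 1 - d 1) * (p 0 - d 0)
        = -(s * ((x i 0 - d 0) * (x (i+1) 1 - d 1) - (x i 1 - d 1) * (x (i+1) 0 - d 0))) := by
      linear_combination (x (i+1) 0 - d 0) * hq 1 - (x (i+1) 1 - d 1) * hq 0
    have hQ : (p 0 - d 0) * (x j 1 - d 1) - (p 1 - d 1) * (x j 0 - d 0)
        = -(t' * ((x j 0 - d 0) * (x (j+1) 1 - d 1) - (x j 1 - d 1) * (x (j+1) 0 - d 0))) := by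
      linear_combination (x j 1 - d 1) * hq' 0 - (x j 0 - d 0) * hq' 1
    have hRle : (x (i+1) 0 - d 0) * (p 1 - d 1) - (x (i+1) 1 - d 1) * (p 0 - d 0) ≤ 0 := by
      rw [hR]
      exact neg_nonpos.2 (mul_nonneg hs D3.le)
    have hQle : (p 0 - d 0) * (x j 1 - d 1) - (p 1 - d 1) * (x j 0 - d 0) ≤ 0 := by
      rw [hQ]
      exact neg_nonpos.2 (mul_nonneg ht' Dbc.le)
    have hid : ((p 0 - d 0) * u 0 + (p 1 - d 1) * u 1)
          * ((x (i+1) 0 - d 0) * (x j 1 - d 1) - (x (i+1) 1 - d 1) * (x j 0 - d 0))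
        = ((p 0 - d 0) * (x j 1 - d 1) - (p 1 - d 1) * (x j 0 - d 0))
            * ((x (i+1) 0 - d 0) * u 0 + (x (i+1) 1 - d 1) * u 1)
          + ((x (i+1) 0 - d 0) * (p 1 - d 1) - (x (i+1) 1 - d 1) * (p 0 - d 0))
            * ((x j 0 - d 0) * u 0 + (x j 1 - d 1) * u 1) := by ring
    have h1 := mul_pos hP Dab
    have h2 : ((p 0 - d 0) * (x j 1 - d 1) - (p 1 - d 1) * (x j 0 - d 0))
        * ((x (i+1) 0 - d 0) * u 0 + (x (i+1) 1 - d 1) * u 1) ≤ 0 :=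
      mul_nonpos_iff.2 (Or.inr ⟨hQle, Ia.le⟩)
    have h3 : ((x (i+1) 0 - d 0) * (p 1 - d 1) - (x (i+1) 1 - d 1) * (p 0 - d 0))
        * ((x j 0 - d 0) * u 0 + (x j 1 - d 1) * u 1) ≤ 0 :=
      mul_nonpos_iff.2 (Or.inr ⟨hRle, Ib.le⟩)
    linarith only [hid, h1, h2, h3]
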